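/- Let U be a semantically deterministic Büchi automaton over an alphabet Σ with n states and L(U) = Σ^ω. Then for every state q of U reachable from the initial state and every finite word u ∈ Σ* of length at least 2^n, there exists a finite run of U on u starting at q that contains at least one accepting transition. -/

import Mathlib

open Filter

/-- A transition: source state, letter, priority, target state. -/
abbrev Tr (Q A : Type) := Q × A × ℕ × Q

def Tr.src {Q A : Type} (t : Tr Q A) : Q := t.1
def Tr.lbl {Q A : Type} (t : Tr Q A) : A := t.2.1
def Tr.pri {Q A : Type} (t : Tr Q A) : ℕ := t.2.2.1
def Tr.tgt {Q A : Type} (t : Tr Q A) : Q := t.2.2.2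

/-- A nondeterministic parity automaton with state type `Q` and alphabet `A`:
an initial state and a set of transitions (finiteness of `Q`, `A` and of the
transition set is assumed in theorem statements). -/
structure NPA (Q A : Type) where
  init : Q
  delta : Set (Tr Q A)

variable {Q P A : Type}

/-- Prepend a letter to an infinite word. -/
def wcons (a : A) (w : ℕ → A) : ℕ → A
  | 0 => a
  | n + 1 => w n

/-- Prepend a finite word to an infinite word. -/
def wcat : List A → (ℕ → A) → ℕ → A
  | [], w => w
  | a :: u, w => wcons a (wcat u w)

/-- The list of the first `n` values of `f`. -/
def pref {α : Type} (f : ℕ → α) (n : ℕ) : List α := (List.range n).map f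

/-- The parity acceptance condition on an infinite sequence of priorities:
the highest priority occurring infinitely often is even. -/
def ParityAccept (pr : ℕ → ℕ) : Prop :=
  ∃ c, Even c ∧ (∃ᶠ n in atTop, pr n = c) ∧ ∀ d, (∃ᶠ n in atTop, pr n = d) → d ≤ c

namespace NPA

/-- `ρ` is a run of `M` on the infinite word `w` starting at state `q`. -/
def IsRun (M : NPA Q A) (q : Q) (w : ℕ → A) (ρ : ℕ → Tr Q A) : Prop :=
  Tr.src (ρ 0) = q ∧
    ∀ n, ρ n ∈ M.delta ∧ Tr.lbl (ρ n) = w n ∧ Tr.src (ρ (n + 1)) = Tr.tgt (ρ n)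

/-- The language of `M` started at state `q`. -/
def LangFrom (M : NPA Q A) (q : Q) : Set (ℕ → A) :=
  {w | ∃ ρ, M.IsRun q w ρ ∧ ParityAccept fun n => Tr.pri (ρ n)}

/-- The language of `M`. -/
def Lang (M : NPA Q A) : Set (ℕ → A) := M.LangFrom M.init

/-- A Büchi automaton: all priorities are 1 or 2. -/
def IsBuchi (M : NPA Q A) : Prop := ∀ t ∈ M.delta, Tr.pri t = 1 ∨ Tr.pri t = 2

/-- A safety automaton: all priorities are 0. -/
def IsSafety (M : NPA Q A) : Prop := ∀ t ∈ M.delta, Tr.pri t = 0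

/-- Determinism: at most one outgoing transition per state and letter. -/
def Deterministic (M : NPA Q A) : Prop :=
  ∀ t₁ ∈ M.delta, ∀ t₂ ∈ M.delta,
    Tr.src t₁ = Tr.src t₂ → Tr.lbl t₁ = Tr.lbl t₂ → t₁ = t₂

/-- The transition `t` is language-preserving: `L(M, tgt t) = (lbl t)⁻¹ L(M, src t)`. -/
def LangPres (M : NPA Q A) (t : Tr Q A) : Prop :=
  M.LangFrom (Tr.tgt t) = {w | wcons (Tr.lbl t) w ∈ M.LangFrom (Tr.src t)}

/-- Semantic determinism: every transition is language-preserving. -/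
def SemDet (M : NPA Q A) : Prop := ∀ t ∈ M.delta, M.LangPres t

/-- `M.FinRun q u p`: there is a finite run of `M` on the finite word `u`
from state `q` ending in state `p`. -/
inductive FinRun (M : NPA Q A) : Q → List A → Q → Prop
  | nil (q : Q) : FinRun M q [] q
  | cons {q : Q} {a : A} {c : ℕ} {p r : Q} {u : List A} :
      (q, a, c, p) ∈ M.delta → FinRun M p u r → FinRun M q (a :: u) r

/-- `ρ` (restricted to indices `< u.length`) is a finite run of `M` on the
finite word `u` starting at state `q`. -/
def IsFinRunOn (M : NPA Q A) (q : Q) (u : List A) (ρ : ℕ → Tr Q A) : Prop :=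
  (0 < u.length → Tr.src (ρ 0) = q) ∧
    ∀ i, (h : i < u.length) →
      ρ i ∈ M.delta ∧ Tr.lbl (ρ i) = u.get ⟨i, h⟩ ∧
        (i + 1 < u.length → Tr.src (ρ (i + 1)) = Tr.tgt (ρ i))

/-- History-determinism: Eve has a strategy in the history-determinism game,
choosing in each round a transition depending only on the letters played so
far (her own previous moves are determined by the strategy), which always
builds a run and builds an accepting run whenever Adam's word is in `L(M)`. -/
def HD (M : NPA Q A) : Prop :=
  ∃ σ : List A → Tr Q A,
    ∀ w : ℕ → A,
      M.IsRun M.init w (fun n => σ (pref w (n + 1))) ∧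
        (w ∈ M.Lang → ParityAccept fun n => Tr.pri (σ (pref w (n + 1))))

end NPA

/-- `B` simulates `M`: Eve has a strategy in the simulation game (in each round
Adam plays a letter and a transition of `M`, then Eve plays a transition of `B`)
such that against every word together with a run of `M` on it, she builds a run
of `B`, which is accepting whenever Adam's run is accepting. -/
def Simulates (B : NPA P A) (M : NPA Q A) : Prop :=
  ∃ σ : List (A × Tr Q A) → Tr P A,
    ∀ (w : ℕ → A) (ρ : ℕ → Tr Q A), M.IsRun M.init w ρ →
      B.IsRun B.init w (fun n => σ (pref (fun i => (w i, ρ i)) (n + 1))) ∧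
        ((ParityAccept fun n => Tr.pri (ρ n)) →
          ParityAccept fun n => Tr.pri (σ (pref (fun i => (w i, ρ i)) (n + 1))))

/-- `B` step-ahead simulates `M`: as in the simulation game, but in each round
Eve picks her transition of `B` (knowing the current letter and all previous
rounds) before Adam picks his transition of `M`. -/
def StepAheadSimulates (B : NPA P A) (M : NPA Q A) : Prop :=
  ∃ σ : List (A × Tr Q A) → A → Tr P A,
    ∀ (w : ℕ → A) (ρ : ℕ → Tr Q A), M.IsRun M.init w ρ →
      B.IsRun B.init w (fun n => σ (pref (fun i => (w i, ρ i)) n) (w n)) ∧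
        ((ParityAccept fun n => Tr.pri (ρ n)) →
          ParityAccept fun n => Tr.pri (σ (pref (fun i => (w i, ρ i)) n) (w n)))

/-- Eve wins the `k`-token game on `M`: she has a strategy, choosing in each
round a transition from the current letter and the full history of previous
rounds (letters and Adam's `k` transitions), such that against every word and
every `k` runs of Adam on it, she builds a run of `M`, which is accepting
whenever at least one of Adam's `k` runs is accepting. -/
def EveWinsTokenGame (k : ℕ) (M : NPA Q A) : Prop :=
  ∃ σ : List (A × (Fin k → Tr Q A)) → A → Tr Q A,
    ∀ (w : ℕ → A) (ρ : Fin k → ℕ → Tr Q A), (∀ i, M.IsRun M.init w (ρ i)) →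
      M.IsRun M.init w (fun n => σ (pref (fun m => (w m, fun i => ρ i m)) n) (w n)) ∧
        ((∃ i, ParityAccept fun n => Tr.pri (ρ i n)) →
          ParityAccept fun n => Tr.pri (σ (pref (fun m => (w m, fun i => ρ i m)) n) (w n)))

/-- The state of Adam's token before round `n` in the Joker game, given his
moves `am` (a transition together with a Joker flag in each round). -/
def jokerAdamState (M : NPA Q A) (am : ℕ → Tr Q A × Bool) : ℕ → Q
  | 0 => M.init
  | n + 1 => Tr.tgt (am n).1

/-- Validity of Adam's moves `am` in the Joker game against Eve's run `ρE`:
in each round Adam's transition is a transition of `M` on the current letter;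
it starts at his token's state if he does not play Joker, and at the current
state of Eve's token if he plays Joker. -/
def JokerValid (M : NPA Q A) (w : ℕ → A) (am : ℕ → Tr Q A × Bool)
    (ρE : ℕ → Tr Q A) : Prop :=
  ∀ n, (am n).1 ∈ M.delta ∧ Tr.lbl (am n).1 = w n ∧
    ((am n).2 = false → Tr.src (am n).1 = jokerAdamState M am n) ∧
    ((am n).2 = true → Tr.src (am n).1 = Tr.src (ρE n))

/-- Eve wins the Joker game on `M`: she has a strategy such that against every
valid play of Adam she builds a run of `M`, which is accepting whenever Adam
plays only finitely many Jokers and his sequence of transitions satisfies the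
parity acceptance condition. -/
def EveWinsJoker (M : NPA Q A) : Prop :=
  ∃ σ : List (A × (Tr Q A × Bool)) → A → Tr Q A,
    ∀ (w : ℕ → A) (am : ℕ → Tr Q A × Bool),
      JokerValid M w am (fun n => σ (pref (fun m => (w m, am m)) n) (w n)) →
        M.IsRun M.init w (fun n => σ (pref (fun m => (w m, am m)) n) (w n)) ∧
          (({n | (am n).2 = true}.Finite ∧ (ParityAccept fun n => Tr.pri (am n).1)) →
            ParityAccept fun n => Tr.pri (σ (pref (fun m => (w m, am m)) n) (w n)))

/-- The `Delay` construction: states are `Q × A` plus a fresh initial state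
(`none`); from the initial state, on each letter `a` move with priority 0 to
`(init, a)`; from `(p, a)`, on each letter `a'`, for each transition
`p →(a:c) q` of `M`, move with priority `c` to `(q, a')`. -/
def NPA.Delay (M : NPA Q A) : NPA (Option (Q × A)) A where
  init := none
  delta :=
    {t | (∃ a : A, t = (none, a, 0, some (M.init, a))) ∨
      ∃ u ∈ M.delta, ∃ a' : A,
        t = (some (Tr.src u, Tr.lbl u), a', Tr.pri u, some (Tr.tgt u, a'))}

/-- The state type of the `k`-fold `Delay` of an automaton over `Q`, `A`. -/
def DelayState (Q A : Type) : ℕ → Type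
  | 0 => Q
  | k + 1 => Option (DelayState Q A k × A)

/-- `k`-fold application of `Delay`. -/
def NPA.DelayIter (M : NPA Q A) : (k : ℕ) → NPA (DelayState Q A k) A
  | 0 => M
  | k + 1 => (M.DelayIter k).Delay

/-- The subautomaton of `M` keeping exactly the language-preserving transitions. -/
def NPA.residual (M : NPA Q A) : NPA Q A where
  init := M.init
  delta := {t ∈ M.delta | M.LangPres t}

/-! ### Auxiliary development -/

namespace SDAux

variable {Q A : Type}

/-- Explicit finite runs: `FR M q u L r` means `L` is the list of transitions of a
run of `M` on `u` from `q` to `r`. -/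
inductive FR (M : NPA Q A) : Q → List A → List (Tr Q A) → Q → Prop
  | nil (q : Q) : FR M q [] [] q
  | cons {q : Q} {a : A} {c : ℕ} {p r : Q} {u : List A} {L : List (Tr Q A)} :
      (q, a, c, p) ∈ M.delta → FR M p u L r → FR M q (a :: u) ((q, a, c, p) :: L) r

lemma FR.length_eq {M : NPA Q A} {q r : Q} {u : List A} {L : List (Tr Q A)}
    (h : FR M q u L r) : L.length = u.length := by
  induction h with
  | nil => rfl
  | cons _ _ ih => simpa using ih

lemma FR.append {M : NPA Q A} {q p r : Q} {u v : List A} {L1 L2 : List (Tr Q A)}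
    (h1 : FR M q u L1 p) (h2 : FR M p v L2 r) : FR M q (u ++ v) (L1 ++ L2) r := by
  induction h1 with
  | nil => simpa
  | cons ht _ ih => exact FR.cons ht (ih h2)

lemma FR.mono {M N : NPA Q A} (hsub : M.delta ⊆ N.delta) {q r : Q} {u : List A}
    {L : List (Tr Q A)} (h : FR M q u L r) : FR N q u L r := by
  induction h with
  | nil => exact FR.nil _
  | cons ht _ ih => exact FR.cons (hsub ht) ih

lemma FR.append_split {M : NPA Q A} {q r : Q} {u v : List A} {L : List (Tr Q A)}
    (h : FR M q (u ++ v) L r) :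
    ∃ p L1 L2, L = L1 ++ L2 ∧ FR M q u L1 p ∧ FR M p v L2 r := by
  induction u generalizing q L with
  | nil => exact ⟨q, [], L, rfl, FR.nil q, h⟩
  | cons a u ih =>
    cases h with
    | cons ht h' =>
      obtain ⟨p, L1, L2, rfl, h1, h2⟩ := ih h'
      exact ⟨p, _ :: L1, L2, rfl, FR.cons ht h1, h2⟩

lemma FR.single_elim {M : NPA Q A} {p r : Q} {a : A} {L : List (Tr Q A)}
    (h : FR M p [a] L r) : ∃ c, (p, a, c, r) ∈ M.delta := by
  cases h with
  | cons ht h' => cases h'; exact ⟨_, ht⟩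

/-- States reachable by an explicit finite run. -/
def Epts (M : NPA Q A) (q : Q) (v : List A) : Set Q := {p | ∃ L, FR M q v L p}

lemma Epts_snoc (M : NPA Q A) (q : Q) (v : List A) (a : A) :
    Epts M q (v ++ [a]) = {r | ∃ p ∈ Epts M q v, ∃ c, (p, a, c, r) ∈ M.delta} := by
  ext r
  constructor
  · rintro ⟨L, h⟩
    obtain ⟨p, L1, L2, rfl, h1, h2⟩ := h.append_split
    obtain ⟨c, hc⟩ := h2.single_elim
    exact ⟨p, ⟨L1, h1⟩, c, hc⟩
  · rintro ⟨p, ⟨L1, h1⟩, c, hc⟩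
    exact ⟨L1 ++ [(p, a, c, r)], h1.append (FR.cons hc (FR.nil r))⟩

lemma pref_zero {α : Type} (f : ℕ → α) : pref f 0 = [] := rfl

lemma pref_succ {α : Type} (f : ℕ → α) (n : ℕ) : pref f (n + 1) = pref f n ++ [f n] := by
  simp [pref, List.range_succ]

lemma pref_succ' {α : Type} (f : ℕ → α) (n : ℕ) :
    pref f (n + 1) = f 0 :: pref (fun i => f (i + 1)) n := by
  simp [pref, List.range_succ_eq_map, List.map_map]

lemma pref_wcat (v : List A) (f : ℕ → A) : pref (wcat v f) v.length = v := by
  induction v with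
  | nil => rfl
  | cons a v ih =>
    show pref (wcons a (wcat v f)) (v.length + 1) = a :: v
    rw [pref_succ']
    exact congrArg (a :: ·) ih

lemma IsRun.fr {M : NPA Q A} {p : Q} {w : ℕ → A} {ρ : ℕ → Tr Q A}
    (h : M.IsRun p w ρ) (m : ℕ) :
    FR M p (pref w m) (pref ρ m) (Tr.src (ρ m)) := by
  induction m with
  | zero => rw [h.1]; exact FR.nil p
  | succ m ih =>
    rw [pref_succ, pref_succ]
    refine ih.append ?_
    obtain ⟨hmem, hlbl, hsrc⟩ := h.2 m
    rw [hsrc]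
    have heq : ρ m = (Tr.src (ρ m), w m, Tr.pri (ρ m), Tr.tgt (ρ m)) := by
      rw [← hlbl]; rfl
    rw [show [ρ m] = [(Tr.src (ρ m), w m, Tr.pri (ρ m), Tr.tgt (ρ m))] from by rw [← heq]]
    exact FR.cons (heq ▸ hmem) (FR.nil _)

/-- `p` is a "universal" state of `M`. -/
def UnivAt (M : NPA Q A) (p : Q) : Prop := M.LangFrom p = Set.univ

lemma UnivAt.step {M : NPA Q A} (hSD : M.SemDet) {p r : Q} {a : A} {c : ℕ}
    (h : UnivAt M p) (ht : (p, a, c, r) ∈ M.delta) : UnivAt M r := by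
  have hp := hSD _ ht
  unfold NPA.LangPres at hp
  have hp' : M.LangFrom r = {w | wcons a w ∈ M.LangFrom p} := hp
  unfold UnivAt at h ⊢
  rw [hp']
  ext w
  simp only [Set.mem_setOf_eq]
  constructor
  · intro _; trivial
  · intro _
    show wcons a w ∈ M.LangFrom p
    rw [h]; trivial

lemma UnivAt.ofFinRun {M : NPA Q A} (hSD : M.SemDet) {p r : Q} {v : List A}
    (h : M.FinRun p v r) (hp : UnivAt M p) : UnivAt M r := by
  induction h with
  | nil => exact hp
  | cons ht _ ih => exact ih (hp.step hSD ht)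

lemma UnivAt.ofFR {M : NPA Q A} (hSD : M.SemDet) {p r : Q} {v : List A}
    {L : List (Tr Q A)} (h : FR M p v L r) (hp : UnivAt M p) : UnivAt M r := by
  induction h with
  | nil => exact hp
  | cons ht _ ih => exact ih (hp.step hSD ht)

lemma UnivAt.exists_fr {M : NPA Q A} [Inhabited A] {p : Q} (h : UnivAt M p)
    (v : List A) : ∃ L r, FR M p v L r := by
  have hw : wcat v (fun _ => default) ∈ M.LangFrom p := by rw [h]; trivial
  obtain ⟨ρ, hrun, -⟩ := hw
  refine ⟨pref ρ v.length, Tr.src (ρ v.length), ?_⟩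
  have := IsRun.fr hrun v.length
  rwa [pref_wcat] at this

lemma FR.getD_spec {M : NPA Q A} {q r : Q} {u : List A} {L : List (Tr Q A)}
    (d : Tr Q A) (h : FR M q u L r) :
    (0 < u.length → Tr.src (L.getD 0 d) = q) ∧
      ∀ i, i < u.length →
        (L.getD i d ∈ M.delta ∧ Tr.lbl (L.getD i d) = u.getD i (Tr.lbl d) ∧
          (i + 1 < u.length → Tr.src (L.getD (i + 1) d) = Tr.tgt (L.getD i d))) := by
  induction h with
  | nil => exact ⟨fun h => absurd h (by simp), fun i hi => absurd hi (by simp)⟩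
  | @cons q a c p r u L ht h' ih =>
    refine ⟨fun _ => rfl, fun i hi => ?_⟩
    match i with
    | 0 =>
      refine ⟨ht, rfl, fun h1 => ?_⟩
      have hu : 0 < u.length := by simpa using h1
      have := ih.1 hu
      simpa [List.getD_cons_succ, Tr.tgt] using this
    | k + 1 =>
      have hk : k < u.length := by simpa using hi
      have := ih.2 k hk
      simpa [List.getD_cons_succ] using this

lemma FR.isFinRunOn {M : NPA Q A} {q r : Q} {u : List A} {L : List (Tr Q A)}
    (d : Tr Q A) (h : FR M q u L r) : M.IsFinRunOn q u (fun i => L.getD i d) := by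
  obtain ⟨h0, hspec⟩ := h.getD_spec d
  refine ⟨h0, fun i hi => ?_⟩
  obtain ⟨h1, h2, h3⟩ := hspec i hi
  refine ⟨h1, ?_, h3⟩
  rw [h2, List.getD_eq_getElem _ _ hi]
  simp

end SDAux

namespace SDAux

variable {Q A : Type}

lemma FR.restrict {M : NPA Q A} {P : Tr Q A → Prop} {q r : Q} {u : List A}
    {L : List (Tr Q A)} (h : FR M q u L r) (hP : ∀ x ∈ L, P x) :
    FR ⟨M.init, {t ∈ M.delta | P t}⟩ q u L r := by
  induction h with
  | nil => exact FR.nil _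
  | cons ht h' ih =>
    exact FR.cons ⟨ht, hP _ List.mem_cons_self⟩
      (ih fun x hx => hP x (List.mem_cons_of_mem _ hx))

lemma mod_succ (x b : ℕ) (hb : 0 < b) :
    (x + 1) % b = if x % b + 1 = b then 0 else x % b + 1 := by
  have hx : x = x % b + b * (x / b) := by
    rw [Nat.mod_add_div]
  have h1 : (x + 1) % b = (x % b + 1) % b := by
    conv_lhs => rw [hx]
    rw [show x % b + b * (x / b) + 1 = x % b + 1 + b * (x / b) by ring]
    exact Nat.add_mul_mod_self_left _ _ _
  rw [h1]
  by_cases he : x % b + 1 = b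
  · rw [if_pos he, he, Nat.mod_self]
  · have : x % b + 1 < b := lt_of_le_of_ne (Nat.mod_lt x hb) he
    rw [if_neg he, Nat.mod_eq_of_lt this]

lemma mem_pref {α : Type} {f : ℕ → α} {n : ℕ} {x : α} (hx : x ∈ pref f n) :
    ∃ s < n, x = f s := by
  simp only [pref, List.mem_map, List.mem_range] at hx
  obtain ⟨s, hs, rfl⟩ := hx
  exact ⟨s, hs, rfl⟩

end SDAux
/-- If U is a semantically deterministic Büchi automaton with n states and
L(U) = Σ^ω, then from every reachable state q, every finite word u of length at least 2^n
has a finite run from q containing at least one accepting (priority 2) transition. -/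
theorem universal_sd_buchi_accepting_transition {Q A : Type} [Fintype Q] [Finite A]
    (U : NPA Q A) (hfin : U.delta.Finite) (hB : U.IsBuchi) (hSD : U.SemDet)
    (huniv : U.Lang = Set.univ)
    (q : Q) (hreach : ∃ v : List A, U.FinRun U.init v q)
    (u : List A) (hlen : 2 ^ Fintype.card Q ≤ u.length) :
    ∃ ρ : ℕ → Tr Q A, U.IsFinRunOn q u ρ ∧ ∃ i, i < u.length ∧ Tr.pri (ρ i) = 2 := by
  classical
  have hulen : 0 < u.length := lt_of_lt_of_le (Nat.pow_pos (by norm_num)) hlen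
  have hune : u ≠ [] := List.ne_nil_of_length_pos hulen
  haveI : Inhabited A := ⟨u.head hune⟩
  set n := Fintype.card Q with hn
  -- `q` is universal
  have huq : SDAux.UnivAt U q := by
    obtain ⟨v, hv⟩ := hreach
    exact SDAux.UnivAt.ofFinRun hSD hv huniv
  -- the non-accepting subautomaton
  set U' : NPA Q A := ⟨U.init, {t ∈ U.delta | Tr.pri t ≠ 2}⟩ with hU'
  have hsub : U'.delta ⊆ U.delta := fun t ht => ht.1
  set S : ℕ → Set Q := fun k => SDAux.Epts U' q (u.take k) with hS
  -- pigeonhole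
  obtain ⟨i, j, hij, hjle, hSij⟩ : ∃ i j : ℕ, i < j ∧ j ≤ 2 ^ n ∧ S i = S j := by
    have hcard : Fintype.card (Set Q) < Fintype.card (Fin (2 ^ n + 1)) := by
      simp [Fintype.card_set, hn]
    obtain ⟨k1, k2, hne, hfeq⟩ :=
      Fintype.exists_ne_map_eq_of_card_lt (fun k : Fin (2 ^ n + 1) => S k.val) hcard
    rcases lt_or_gt_of_ne (fun h : (k1 : ℕ) = (k2 : ℕ) => hne (Fin.ext h)) with hlt | hlt
    · exact ⟨k1, k2, hlt, Nat.lt_succ_iff.mp k2.isLt, hfeq⟩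
    · exact ⟨k2, k1, hlt, Nat.lt_succ_iff.mp k1.isLt, hfeq.symm⟩
  have hjlen : j ≤ u.length := le_trans hjle hlen
  have hd : 0 < j - i := Nat.sub_pos_of_lt hij
  have hj0 : 0 < j := Nat.lt_of_le_of_lt (Nat.zero_le i) hij
  set hfun : ℕ → ℕ := fun m => if m < j then m else i + (m - i) % (j - i) with hh
  have hlt : ∀ m, hfun m < j := by
    intro m
    by_cases hm : m < j
    · simpa [hh, hm] using hm
    · have : (m - i) % (j - i) < j - i := Nat.mod_lt _ hd
      simp only [hh, if_neg hm]
      omega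
  have hstepS : ∀ m, S (hfun (m + 1)) = S (hfun m + 1) := by
    intro m
    rcases lt_trichotomy (m + 1) j with h1 | h1 | h1
    · have hm : m < j := Nat.lt_of_succ_lt h1
      simp [hh, h1, hm]
    · have hm : m < j := by omega
      have : hfun (m + 1) = i := by
        simp only [hh, if_neg (by omega : ¬ m + 1 < j)]
        have : m + 1 - i = j - i := by omega
        rw [this, Nat.mod_self]
        omega
      rw [this]
      have : hfun m + 1 = j := by simp [hh, hm]; omega
      rw [this, hSij]
    · have hm : ¬ m < j := by omega
      have hm1 : ¬ m + 1 < j := by omega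
      have hmod := SDAux.mod_succ (m - i) (j - i) hd
      have hii : m + 1 - i = m - i + 1 := by omega
      by_cases he : (m - i) % (j - i) + 1 = j - i
      · have h2 : hfun (m + 1) = i := by
          simp only [hh, if_neg hm1, hii, hmod, if_pos he, Nat.add_zero]
        have h3 : hfun m + 1 = j := by
          simp only [hh, if_neg hm]; omega
        rw [h2, h3, hSij]
      · have h2 : hfun (m + 1) = hfun m + 1 := by
          simp only [hh, if_neg hm1, if_neg hm, hii, hmod, if_neg he]; omega
        rw [h2]
  -- the pumped word
  set w : ℕ → A := fun m => u.getD (hfun m) default with hw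
  have hwk : ∀ m, w m = (u[hfun m]'(lt_of_lt_of_le (hlt m) hjlen)) := by
    intro m
    exact List.getD_eq_getElem _ _ _
  have hmain : ∀ m, SDAux.Epts U' q (pref w m) = S (hfun m) := by
    intro m
    induction m with
    | zero =>
      have h0 : hfun 0 = 0 := by simp [hh, hj0]
      rw [h0]
      simp [SDAux.pref_zero, hS]
    | succ m ih =>
      have hk : hfun m < u.length := lt_of_lt_of_le (hlt m) hjlen
      have htake : u.take (hfun m + 1) = u.take (hfun m) ++ [(u[hfun m]'hk)] := by
        rw [List.take_succ, List.getElem?_eq_getElem hk]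
        rfl
      rw [SDAux.pref_succ, SDAux.Epts_snoc, ih, hstepS m]
      show _ = SDAux.Epts U' q (u.take (hfun m + 1))
      rw [htake, SDAux.Epts_snoc, hwk m]
  -- accepting run on the pumped word
  have hwacc : w ∈ U.LangFrom q := by rw [huq]; trivial
  obtain ⟨ρ, hrun, hacc⟩ := hwacc
  have hc2 : ∃ t, Tr.pri (ρ t) = 2 := by
    obtain ⟨c, hceven, hcfreq, -⟩ := hacc
    obtain ⟨t, ht⟩ := hcfreq.exists
    have ht' : Tr.pri (ρ t) = c := ht
    refine ⟨t, ?_⟩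
    rcases hB _ (hrun.2 t).1 with h1 | h2
    · exfalso
      have hcev := Nat.even_iff.mp hceven
      omega
    · exact h2
  set t := Nat.find hc2 with hts
  have ht2 : Tr.pri (ρ t) = 2 := Nat.find_spec hc2
  have hmin : ∀ s < t, Tr.pri (ρ s) ≠ 2 := fun s hs => Nat.find_min hc2 hs
  -- the prefix of the accepting run avoids priority 2
  have hpre : SDAux.FR U q (pref w t) (pref ρ t) (Tr.src (ρ t)) := SDAux.IsRun.fr hrun t
  have hpre' : SDAux.FR U' q (pref w t) (pref ρ t) (Tr.src (ρ t)) := by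
    rw [hU']
    refine hpre.restrict fun x hx => ?_
    obtain ⟨s, hs, rfl⟩ := SDAux.mem_pref hx
    exact hmin s hs
  have hkt : hfun t < u.length := lt_of_lt_of_le (hlt t) hjlen
  have hsrc_mem : Tr.src (ρ t) ∈ S (hfun t) := by
    rw [← hmain t]
    exact ⟨_, hpre'⟩
  obtain ⟨L1, hL1⟩ := hsrc_mem
  have hL1U : SDAux.FR U q (u.take (hfun t)) L1 (Tr.src (ρ t)) := hL1.mono hsub
  -- the accepting transition itself
  have hwt : Tr.lbl (ρ t) = (u[hfun t]'hkt) := by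
    rw [(hrun.2 t).2.1]
    exact hwk t
  have heq : ρ t = (Tr.src (ρ t), (u[hfun t]'hkt), Tr.pri (ρ t), Tr.tgt (ρ t)) := by
    rw [← hwt]
    rfl
  have hmem2 : (Tr.src (ρ t), (u[hfun t]'hkt), Tr.pri (ρ t), Tr.tgt (ρ t)) ∈ U.delta :=
    heq ▸ (hrun.2 t).1
  have hmid : SDAux.FR U (Tr.src (ρ t)) [(u[hfun t]'hkt)] [ρ t] (Tr.tgt (ρ t)) := by
    rw [show ([ρ t] : List (Tr Q A)) =
        [(Tr.src (ρ t), (u[hfun t]'hkt), Tr.pri (ρ t), Tr.tgt (ρ t))] from by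
      rw [← heq]]
    exact SDAux.FR.cons hmem2 (SDAux.FR.nil _)
  -- complete the run on the remaining suffix
  have hut : SDAux.UnivAt U (Tr.tgt (ρ t)) :=
    SDAux.UnivAt.step hSD (SDAux.UnivAt.ofFR hSD hL1U huq) hmem2
  obtain ⟨L2, r', hL2⟩ := hut.exists_fr (u.drop (hfun t + 1))
  have hfull : SDAux.FR U q u (L1 ++ ρ t :: L2) r' := by
    have hcat := hL1U.append (hmid.append hL2)
    have hu : u.take (hfun t) ++ ([(u[hfun t]'hkt)] ++ u.drop (hfun t + 1)) = u := by
      rw [show [(u[hfun t]'hkt)] ++ u.drop (hfun t + 1)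
          = (u[hfun t]'hkt) :: u.drop (hfun t + 1) from rfl,
        ← List.drop_eq_getElem_cons hkt, List.take_append_drop]
    rwa [hu] at hcat
  have hlen1 : L1.length = hfun t := by
    rw [hL1.length_eq, List.length_take]
    omega
  refine ⟨fun i => (L1 ++ ρ t :: L2).getD i (ρ t), hfull.isFinRunOn (ρ t), hfun t, hkt, ?_⟩
  show Tr.pri ((L1 ++ ρ t :: L2).getD (hfun t) (ρ t)) = 2
  rw [← hlen1, List.getD_append_right _ _ _ _ le_rfl]
  simp [ht2]
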